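/- Let K = F_q be a finite field and X ⊆ P^{s-1} a set of clutter type (supp(y^{v_i}) ⊄ supp(y^{v_j}) for i ≠ j). If G is a minimal generating set of I(X) consisting of binomials, then for each pair 1 ≤ i < j ≤ s there is a binomial g_{ij} ∈ G of the form ±(t_i^{c_{ij}} t_j - t^{b_{ij}}) with c_{ij} a positive integer at most q and b_{ij} ∈ N^s \ {0}. -/

import Mathlib

open MvPolynomial

/-- Evaluation of the monomials `y^{v_1},…,y^{v_s}` at a point `x ∈ K^n`. -/
noncomputable def monEval {K : Type} [Field K] {n s : ℕ} (v : Fin s → Fin n → ℕ)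
    (x : Fin n → K) : Fin s → K := fun i => ∏ j, x j ^ v i j

/-- The subset of `ℙ^{s-1}` parameterized by the monomials `y^{v_1},…,y^{v_s}`. -/
noncomputable def paramSet {K : Type} [Field K] {n s : ℕ} (v : Fin s → Fin n → ℕ) :
    Set (Projectivization K (Fin s → K)) :=
  { p | ∃ (x : Fin n → K) (h : monEval v x ≠ 0), p = Projectivization.mk K (monEval v x) h }

/-- The vanishing ideal of a set of projective points: the ideal generated by the
homogeneous polynomials vanishing at all points of the set. -/
noncomputable def vanishIdeal {K : Type} [Field K] {s : ℕ}
    (X : Set (Projectivization K (Fin s → K))) : Ideal (MvPolynomial (Fin s) K) :=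
  Ideal.span { f | (∃ d, f.IsHomogeneous d) ∧ ∀ p ∈ X, eval p.rep f = 0 }

/-- `supp(y^{v_i}) ⊄ supp(y^{v_j})` for all `i ≠ j`. -/
def clutterType {n s : ℕ} (v : Fin s → Fin n → ℕ) : Prop :=
  ∀ i j : Fin s, i ≠ j → ¬ ({k | v i k ≠ 0} ⊆ {k | v j k ≠ 0})

attribute [local instance] MvPolynomial.gradedAlgebra

section Aux

variable {K : Type} [Field K] {n s : ℕ}

/-- the `i`-th unit indicator vector in `K^s` -/
noncomputable def uvec (K : Type) [Field K] {s : ℕ} (i : Fin s) : Fin s → K :=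
  fun k => if k = i then 1 else 0

lemma uvec_ne_zero (i : Fin s) : (uvec K i) ≠ 0 := by
  intro h
  have := congrFun h i
  simp [uvec] at this

lemma monEval_indicator (v : Fin s → Fin n → ℕ) (hcl : clutterType v) (i : Fin s) :
    monEval v (fun m => if v i m ≠ 0 then (1 : K) else 0) = uvec K i := by
  funext k
  by_cases hk : k = i
  · subst hk
    simp only [monEval, uvec, if_pos rfl]
    apply Finset.prod_eq_one
    intro m _
    by_cases h : v k m = 0 <;> simp [h]
  · simp only [monEval, uvec, if_neg hk]
    obtain ⟨m, hm1, hm2⟩ := Set.not_subset.mp (hcl k i hk)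
    simp only [Set.mem_setOf_eq, not_not] at hm1 hm2
    apply Finset.prod_eq_zero (Finset.mem_univ m)
    rw [hm2]
    simp [zero_pow hm1]

lemma mem_paramSet_uvec (v : Fin s → Fin n → ℕ) (hcl : clutterType v) (i : Fin s) :
    Projectivization.mk K (uvec K i) (uvec_ne_zero i) ∈ paramSet v := by
  refine ⟨fun m => if v i m ≠ 0 then (1 : K) else 0, ?_, ?_⟩
  · rw [monEval_indicator v hcl i]
    exact uvec_ne_zero i
  · rw [Projectivization.mk_eq_mk_iff]
    exact ⟨1, by rw [one_smul, monEval_indicator v hcl i]⟩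

lemma vanish_at (X : Set (Projectivization K (Fin s → K))) {f : MvPolynomial (Fin s) K}
    (hf : f ∈ vanishIdeal X) {p : Projectivization K (Fin s → K)} (hp : p ∈ X) :
    eval p.rep f = 0 := by
  have hle : vanishIdeal X ≤ RingHom.ker (eval p.rep) := by
    rw [vanishIdeal, Ideal.span_le]
    intro g hg
    exact RingHom.mem_ker.mpr (hg.2 p hp)
  exact RingHom.mem_ker.mp (hle hf)

lemma exists_lam (v : Fin s → Fin n → ℕ) (hcl : clutterType v) (i : Fin s)
    {f : MvPolynomial (Fin s) K} (hf : f ∈ vanishIdeal (paramSet v)) :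
    ∃ lam : K, lam ≠ 0 ∧ eval (lam • uvec K i) f = 0 := by
  set p := Projectivization.mk K (uvec K i) (uvec_ne_zero i) with hp
  have hmem := mem_paramSet_uvec (K := K) v hcl i
  have h0 := vanish_at (paramSet v) hf hmem
  have hrep : Projectivization.mk K p.rep p.rep_nonzero = Projectivization.mk K (uvec K i) (uvec_ne_zero i) :=
    Projectivization.mk_rep p
  rw [Projectivization.mk_eq_mk_iff] at hrep
  obtain ⟨a, ha⟩ := hrep
  refine ⟨(a : K), a.ne_zero, ?_⟩
  have : (a : K) • uvec K i = p.rep := by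
    rw [← ha]; rfl
  rw [this]
  exact h0

lemma eval_monomial_smul_uvec (lam : K) (i : Fin s) (A : Fin s →₀ ℕ) :
    eval (lam • uvec K i) (monomial A (1 : K)) =
      if ∀ k, k ≠ i → A k = 0 then lam ^ A i else 0 := by
  rw [eval_monomial]
  split_ifs with h
  · have hA : A = Finsupp.single i (A i) := by
      ext k
      by_cases hk : k = i
      · subst hk; simp
      · rw [h k hk, Finsupp.single_apply, if_neg (fun he => hk he.symm)]
    rw [hA]
    rw [Finsupp.prod_single_index (by simp)]
    simp [uvec, Finsupp.single_apply]
  · push_neg at h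
    obtain ⟨k, hk, hAk⟩ := h
    rw [one_mul, Finsupp.prod]
    apply Finset.prod_eq_zero (Finsupp.mem_support_iff.mpr hAk)
    simp [uvec, hk, zero_pow hAk]

lemma zero_not_mem_G {G : Set (MvPolynomial (Fin s) K)} (v : Fin s → Fin n → ℕ)
    (hmin : ∀ g ∈ G, Ideal.span (G \ {g}) ≠ vanishIdeal (paramSet v))
    (hgen : Ideal.span G = vanishIdeal (paramSet v)) :
    (0 : MvPolynomial (Fin s) K) ∉ G := by
  intro h0
  apply hmin 0 h0
  rw [← hgen]
  refine le_antisymm (Ideal.span_mono Set.diff_subset) ?_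
  rw [Ideal.span_le]
  intro g hg
  by_cases hg0 : g = 0
  · rw [hg0]; exact (Ideal.span _).zero_mem
  · exact Ideal.subset_span ⟨hg, by simp [hg0]⟩

lemma vanishIdeal_isHomogeneous (X : Set (Projectivization K (Fin s → K))) :
    (vanishIdeal X).IsHomogeneous (homogeneousSubmodule (Fin s) K) := by
  apply Ideal.homogeneous_span
  rintro f ⟨⟨d, hd⟩, -⟩
  exact ⟨d, (mem_homogeneousSubmodule _ _).mpr hd⟩

lemma component_mem_vanishIdeal (X : Set (Projectivization K (Fin s → K)))
    {f : MvPolynomial (Fin s) K} (hf : f ∈ vanishIdeal X) (d : ℕ) :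
    homogeneousComponent d f ∈ vanishIdeal X := by
  have h := vanishIdeal_isHomogeneous X d hf
  have he : (DirectSum.decompose (homogeneousSubmodule (Fin s) K) f d : MvPolynomial (Fin s) K)
      = homogeneousComponent d f := decomposition.decompose'_apply f d
  rwa [he] at h

lemma mono_mem_of_binom (X : Set (Projectivization K (Fin s → K))) {A B : Fin s →₀ ℕ}
    (h : monomial A (1 : K) - monomial B 1 ∈ vanishIdeal X)
    (hAB : A.degree ≠ B.degree) : monomial A (1 : K) ∈ vanishIdeal X := by
  have hc := component_mem_vanishIdeal X h A.degree
  have hA : (monomial A (1 : K)) ∈ homogeneousSubmodule (Fin s) K A.degree :=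
    (mem_homogeneousSubmodule _ _).mpr (isHomogeneous_monomial _ rfl)
  have hB : (monomial B (1 : K)) ∈ homogeneousSubmodule (Fin s) K B.degree :=
    (mem_homogeneousSubmodule _ _).mpr (isHomogeneous_monomial _ rfl)
  rwa [map_sub, homogeneousComponent_of_mem hA, if_pos rfl,
    homogeneousComponent_of_mem hB, if_neg hAB, sub_zero] at hc

end Aux

lemma degree_single {σ : Type*} (i : σ) (c : ℕ) : (Finsupp.single i c).degree = c := by
  classical
  by_cases hc : c = 0
  · rw [hc, Finsupp.single_zero, map_zero]
  · rw [Finsupp.degree_apply, Finsupp.support_single_ne_zero _ hc, Finset.sum_singleton,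
      Finsupp.single_eq_same]

section Key

variable {K : Type} [Field K] [Fintype K] {n s : ℕ}

lemma key (v : Fin s → Fin n → ℕ) (hcl : clutterType v) (G : Set (MvPolynomial (Fin s) K))
    (hgen : Ideal.span G = vanishIdeal (paramSet v))
    (hmin : ∀ g ∈ G, Ideal.span (G \ {g}) ≠ vanishIdeal (paramSet v))
    {i j : Fin s} (hij : i ≠ j) {g : MvPolynomial (Fin s) K} (hg : g ∈ G)
    {A B : Fin s →₀ ℕ}
    (hgAB : g = monomial A 1 - monomial B 1 ∨ g = monomial B 1 - monomial A 1)
    (hA : A ≤ Finsupp.single i (Fintype.card K) + Finsupp.single j 1) :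
    ∃ c : ℕ, 0 < c ∧ c ≤ Fintype.card K ∧
      A = Finsupp.single i c + Finsupp.single j 1 ∧ B ≠ 0 := by
  have hgI : g ∈ vanishIdeal (paramSet v) := hgen ▸ Ideal.subset_span hg
  have hmem : monomial A (1 : K) - monomial B 1 ∈ vanishIdeal (paramSet v) := by
    rcases hgAB with h | h
    · rwa [h] at hgI
    · rw [h] at hgI
      have h2 := neg_mem hgI
      rwa [neg_sub] at h2
  have hABne : A ≠ B := by
    intro he
    have : g = 0 := by
      rcases hgAB with h | h <;> rw [h, he, sub_self]
    exact zero_not_mem_G v hmin hgen (this ▸ hg)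
  -- coordinatewise bounds on A
  have hAk : ∀ k : Fin s, A k ≤ Finsupp.single i (Fintype.card K) k + Finsupp.single j 1 k := by
    intro k
    have := Finsupp.le_def.mp hA k
    rwa [Finsupp.add_apply] at this
  have hAi : A i ≤ Fintype.card K := by
    have := hAk i
    rwa [Finsupp.single_apply, if_pos rfl, Finsupp.single_apply,
      if_neg (fun h => hij h.symm), add_zero] at this
  have hAj : A j ≤ 1 := by
    have := hAk j
    rwa [Finsupp.single_apply, if_neg hij, Finsupp.single_apply,
      if_pos rfl, zero_add] at this
  have hAo : ∀ k, k ≠ i → k ≠ j → A k = 0 := by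
    intro k hki hkj
    have := hAk k
    rwa [Finsupp.single_apply, if_neg (fun h => hki h.symm),
      Finsupp.single_apply, if_neg (fun h => hkj h.symm), add_zero, Nat.le_zero] at this
  -- the fundamental evaluation consequence at the index-m point
  have binom_eval : ∀ m : Fin s, ∃ lam : K, lam ≠ 0 ∧
      (if ∀ k, k ≠ m → A k = 0 then lam ^ A m else 0)
        - (if ∀ k, k ≠ m → B k = 0 then lam ^ B m else 0) = 0 := by
    intro m
    obtain ⟨lam, hlam, hev⟩ := exists_lam v hcl m hmem
    refine ⟨lam, hlam, ?_⟩
    rwa [map_sub, eval_monomial_smul_uvec, eval_monomial_smul_uvec] at hev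
  by_cases hAj0 : A j = 0
  · exfalso
    have hsuppA : ∀ k, k ≠ i → A k = 0 := by
      intro k hk
      by_cases hkj : k = j
      · rw [hkj]; exact hAj0
      · exact hAo k hk hkj
    obtain ⟨lam, hlam, heq⟩ := binom_eval i
    rw [if_pos hsuppA] at heq
    by_cases hsuppB : ∀ k, k ≠ i → B k = 0
    · have hAeq : A = Finsupp.single i (A i) := by
        ext k
        by_cases hk : k = i
        · rw [hk]; simp
        · rw [hsuppA k hk, Finsupp.single_apply, if_neg (fun h => hk h.symm)]
      have hBeq : B = Finsupp.single i (B i) := by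
        ext k
        by_cases hk : k = i
        · rw [hk]; simp
        · rw [hsuppB k hk, Finsupp.single_apply, if_neg (fun h => hk h.symm)]
      have hne : A.degree ≠ B.degree := by
        rw [hAeq, hBeq, degree_single, degree_single]
        intro h
        exact hABne (by rw [hAeq, hBeq, h])
      have hmono := mono_mem_of_binom _ hmem hne
      obtain ⟨lam2, hlam2, hev2⟩ := exists_lam v hcl i hmono
      rw [eval_monomial_smul_uvec, if_pos hsuppA] at hev2
      exact pow_ne_zero _ hlam2 hev2
    · rw [if_neg hsuppB, sub_zero] at heq
      exact pow_ne_zero _ hlam heq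
  · have hAj1 : A j = 1 := le_antisymm hAj (Nat.one_le_iff_ne_zero.mpr hAj0)
    by_cases hAi0 : A i = 0
    · exfalso
      have hsuppA : ∀ k, k ≠ j → A k = 0 := by
        intro k hk
        by_cases hki : k = i
        · rw [hki]; exact hAi0
        · exact hAo k hki hk
      obtain ⟨lam, hlam, heq⟩ := binom_eval j
      rw [if_pos hsuppA] at heq
      by_cases hsuppB : ∀ k, k ≠ j → B k = 0
      · have hAeq : A = Finsupp.single j (A j) := by
          ext k
          by_cases hk : k = j
          · rw [hk]; simp
          · rw [hsuppA k hk, Finsupp.single_apply, if_neg (fun h => hk h.symm)]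
        have hBeq : B = Finsupp.single j (B j) := by
          ext k
          by_cases hk : k = j
          · rw [hk]; simp
          · rw [hsuppB k hk, Finsupp.single_apply, if_neg (fun h => hk h.symm)]
        have hne : A.degree ≠ B.degree := by
          rw [hAeq, hBeq, degree_single, degree_single]
          intro h
          exact hABne (by rw [hAeq, hBeq, h])
        have hmono := mono_mem_of_binom _ hmem hne
        obtain ⟨lam2, hlam2, hev2⟩ := exists_lam v hcl j hmono
        rw [eval_monomial_smul_uvec, if_pos hsuppA] at hev2
        exact pow_ne_zero _ hlam2 hev2
      · rw [if_neg hsuppB, sub_zero] at heq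
        exact pow_ne_zero _ hlam heq
    · refine ⟨A i, Nat.pos_of_ne_zero hAi0, hAi, ?_, ?_⟩
      · ext k
        by_cases hki : k = i
        · rw [hki]
          rw [Finsupp.add_apply, Finsupp.single_apply, if_pos rfl, Finsupp.single_apply,
            if_neg (fun h => hij h.symm), add_zero]
        · by_cases hkj : k = j
          · rw [hkj]
            rw [Finsupp.add_apply, Finsupp.single_apply, if_neg hij, Finsupp.single_apply,
              if_pos rfl, zero_add, hAj1]
          · rw [hAo k hki hkj, Finsupp.add_apply, Finsupp.single_apply,
              if_neg (fun h => hki h.symm), Finsupp.single_apply, if_neg (fun h => hkj h.symm),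
              add_zero]
      · intro hB0
        obtain ⟨lam, hlam, heq⟩ := binom_eval i
        have h1 : ¬ (∀ k, k ≠ i → A k = 0) := by
          intro h
          exact hAj0 (h j (fun hji => hij hji.symm))
        have h2 : ∀ k, k ≠ i → B k = 0 := by
          intro k _
          rw [hB0]; rfl
        rw [if_neg h1, if_pos h2, hB0] at heq
        simp at heq

end Key

/-- If `X` is of clutter type and `G` is a minimal generating set of `I(X)` consisting of
binomials, then for each pair `i < j` there is `g_{ij} ∈ G` of the form
`±(t_i^{c_{ij}} t_j - t^{b_{ij}})` with `0 < c_{ij} ≤ q` and `b_{ij} ≠ 0`. -/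
theorem stmt2 {K : Type} [Field K] [Fintype K] {n s : ℕ} (v : Fin s → Fin n → ℕ)
    (hcl : clutterType v) (G : Set (MvPolynomial (Fin s) K))
    (hgen : Ideal.span G = vanishIdeal (paramSet v))
    (hbin : ∀ g ∈ G, ∃ a b : Fin s →₀ ℕ, g = monomial a 1 - monomial b 1)
    (hmin : ∀ g ∈ G, Ideal.span (G \ {g}) ≠ vanishIdeal (paramSet v)) :
    ∀ i j : Fin s, i < j → ∃ g ∈ G, ∃ c : ℕ, 0 < c ∧ c ≤ Fintype.card K ∧
      ∃ b : Fin s →₀ ℕ, b ≠ 0 ∧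
        (g = monomial (Finsupp.single i c + Finsupp.single j 1) 1 - monomial b 1 ∨
         g = monomial b 1 - monomial (Finsupp.single i c + Finsupp.single j 1) 1) := by
  intro i j hijlt
  have hij : i ≠ j := Fin.ne_of_lt hijlt
  have hq2 : 1 < Fintype.card K := Fintype.one_lt_card
  set m0 : Fin s →₀ ℕ := Finsupp.single i (Fintype.card K) + Finsupp.single j 1 with hm0
  set m1 : Fin s →₀ ℕ := Finsupp.single i 1 + Finsupp.single j (Fintype.card K) with hm1
  have e0 : m0 i = Fintype.card K := by
    rw [hm0, Finsupp.add_apply, Finsupp.single_eq_same,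
      Finsupp.single_eq_of_ne' (Ne.symm hij), add_zero]
  have e1 : m1 i = 1 := by
    rw [hm1, Finsupp.add_apply, Finsupp.single_eq_same,
      Finsupp.single_eq_of_ne' (Ne.symm hij), add_zero]
  have hm01 : m1 ≠ m0 := by
    intro h
    have h2 : m1 i = m0 i := by rw [h]
    rw [e0, e1] at h2
    omega
  have hX : ∀ k : Fin s, (X k : MvPolynomial (Fin s) K) = monomial (Finsupp.single k 1) 1 := by
    intro k
    rw [← X_pow_eq_monomial, pow_one]
  set f : MvPolynomial (Fin s) K := X i ^ Fintype.card K * X j - X i * X j ^ Fintype.card K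
    with hf
  have hf_eq : f = monomial m0 1 - monomial m1 1 := by
    rw [hf, X_pow_eq_monomial, X_pow_eq_monomial, hX i, hX j, monomial_mul, monomial_mul,
      mul_one, hm0, hm1]
  have hfhom : f.IsHomogeneous (Fintype.card K + 1) := by
    have h1 : (X i ^ Fintype.card K * X j : MvPolynomial (Fin s) K).IsHomogeneous
        (Fintype.card K + 1) := (isHomogeneous_X_pow i (Fintype.card K)).mul (isHomogeneous_X _ j)
    have h2 : (X i * X j ^ Fintype.card K : MvPolynomial (Fin s) K).IsHomogeneous
        (Fintype.card K + 1) := by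
      have := (isHomogeneous_X K i).mul (isHomogeneous_X_pow j (Fintype.card K))
      rwa [Nat.add_comm] at this
    exact h1.sub h2
  have hfvan : ∀ p ∈ paramSet v, eval p.rep f = 0 := by
    intro p _
    rw [hf]
    simp only [map_sub, map_mul, map_pow, eval_X]
    rw [FiniteField.pow_card, FiniteField.pow_card]
    ring
  have hfI : f ∈ vanishIdeal (paramSet v) :=
    Ideal.subset_span ⟨⟨Fintype.card K + 1, hfhom⟩, hfvan⟩
  have hspan : f ∈ Ideal.span G := by rw [hgen]; exact hfI
  obtain ⟨co, hsupp, hsum⟩ := Submodule.mem_span_set.mp hspan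
  have hco : coeff m0 f = 1 := by
    rw [hf_eq, coeff_sub, coeff_monomial, coeff_monomial, if_pos rfl, if_neg hm01, sub_zero]
  rw [Finsupp.sum] at hsum
  have hcoeffsum : ∑ g ∈ co.support, coeff m0 (co g • g) = 1 := by
    rw [← coeff_sum, hsum, hco]
  obtain ⟨g, hgsup, hgne⟩ := Finset.exists_ne_zero_of_sum_ne_zero
    (hcoeffsum ▸ (one_ne_zero : (1 : K) ≠ 0))
  have hgG : g ∈ G := hsupp hgsup
  obtain ⟨A, B, hAB⟩ := hbin g hgG
  rw [hAB, smul_eq_mul, mul_sub, coeff_sub, coeff_mul_monomial', coeff_mul_monomial'] at hgne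
  have hdvd : A ≤ m0 ∨ B ≤ m0 := by
    by_contra hcon
    push_neg at hcon
    rw [if_neg hcon.1, if_neg hcon.2, sub_zero] at hgne
    exact hgne rfl
  rcases hdvd with hle | hle
  · obtain ⟨c, hc0, hcq, hAeq, hBne⟩ := key v hcl G hgen hmin hij hgG (Or.inl hAB) hle
    exact ⟨g, hgG, c, hc0, hcq, B, hBne, Or.inl (by rw [hAB, hAeq])⟩
  · obtain ⟨c, hc0, hcq, hBeq, hAne⟩ := key v hcl G hgen hmin hij hgG (Or.inr hAB) hle
    exact ⟨g, hgG, c, hc0, hcq, A, hAne, Or.inr (by rw [hAB, hBeq])⟩
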